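/- Let m and n be positive multiples of 11 (so in particular m, n ≥ 11). Then the λ-number of the strong product C_m ⊠ C_n of the cycles C_m and C_n equals 10. -/

import Mathlib

/-- The path graph `P_m` on vertices `0, …, m-1`. -/
def pathG (m : ℕ) : SimpleGraph (Fin m) where
  Adj i j := (i : ℕ) + 1 = (j : ℕ) ∨ (j : ℕ) + 1 = (i : ℕ)
  symm := ⟨fun i j h => h.symm⟩
  loopless := ⟨by intro i h; rcases h with h | h <;> omega⟩

/-- The cycle graph `C_n` on vertices `0, …, n-1` (as `ZMod n`). -/
def cycleG (n : ℕ) : SimpleGraph (ZMod n) where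
  Adj u v := u ≠ v ∧ (v = u + 1 ∨ u = v + 1)
  symm := ⟨fun u v ⟨h1, h2⟩ => ⟨h1.symm, h2.symm⟩⟩
  loopless := ⟨fun u h => h.1 rfl⟩

/-- The strong product `G ⊠ H`. -/
def strongProd {α β : Type*} (G : SimpleGraph α) (H : SimpleGraph β) :
    SimpleGraph (α × β) where
  Adj u v :=
    (u.1 = v.1 ∧ H.Adj u.2 v.2) ∨ (u.2 = v.2 ∧ G.Adj u.1 v.1) ∨
    (G.Adj u.1 v.1 ∧ H.Adj u.2 v.2)
  symm := ⟨by
    rintro u v (⟨h1, h2⟩ | ⟨h1, h2⟩ | ⟨h1, h2⟩)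
    · exact Or.inl ⟨h1.symm, h2.symm⟩
    · exact Or.inr (Or.inl ⟨h1.symm, h2.symm⟩)
    · exact Or.inr (Or.inr ⟨h1.symm, h2.symm⟩)⟩
  loopless := ⟨by
    rintro u (⟨-, h⟩ | ⟨-, h⟩ | ⟨h, -⟩)
    · exact H.loopless.irrefl _ h
    · exact G.loopless.irrefl _ h
    · exact G.loopless.irrefl _ h⟩

/-- `f` is an `L(2,1)`-labeling of `G`: labels of adjacent vertices differ by at least 2,
labels of vertices at distance 2 differ by at least 1. -/
def IsL21Labeling {V : Type*} (G : SimpleGraph V) (f : V → ℕ) : Prop :=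
  (∀ u v, G.Adj u v → 2 ≤ |(f u : ℤ) - (f v : ℤ)|) ∧
  (∀ u v, G.dist u v = 2 → 1 ≤ |(f u : ℤ) - (f v : ℤ)|)

/-- The span of a labeling: largest label minus smallest label. -/
noncomputable def spanOf {V : Type*} (f : V → ℕ) : ℕ :=
  sSup (Set.range f) - sInf (Set.range f)

/-- The `λ`-number of `G`: the minimum span over all `L(2,1)`-labelings of `G`. -/
noncomputable def lambdaNumber {V : Type*} (G : SimpleGraph V) : ℕ :=
  sInf { s : ℕ | ∃ f : V → ℕ, IsL21Labeling G f ∧ spanOf f = s }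

section Helpers

lemma smallCastInj {m : ℕ} (hm : 11 ≤ m) {a b : ℤ} (ha : -5 ≤ a) (ha' : a ≤ 5)
    (hb : -5 ≤ b) (hb' : b ≤ 5) : ((a : ZMod m) = (b : ZMod m)) ↔ a = b := by
  constructor
  · intro h
    have hd : (m : ℤ) ∣ b - a := ((ZMod.intCast_eq_intCast_iff a b m).1 h).dvd
    obtain ⟨k, hk⟩ := hd
    have hm' : (11 : ℤ) ≤ (m : ℤ) := by exact_mod_cast hm
    rcases lt_trichotomy k 0 with hk0 | rfl | hk0
    · have : (m : ℤ) * k ≤ (m : ℤ) * (-1) :=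
        mul_le_mul_of_nonneg_left (by omega) (by omega)
      omega
    · omega
    · have : (m : ℤ) * 1 ≤ (m : ℤ) * k :=
        mul_le_mul_of_nonneg_left (by omega) (by omega)
      omega
  · rintro rfl; rfl

lemma cycAdjIff {m : ℕ} (hm : 11 ≤ m) (x : ZMod m) {a b : ℤ} (ha : -2 ≤ a) (ha' : a ≤ 2)
    (hb : -2 ≤ b) (hb' : b ≤ 2) :
    (cycleG m).Adj (x + (a : ZMod m)) (x + (b : ZMod m)) ↔
      (¬ (a = b) ∧ (b = a + 1 ∨ a = b + 1)) := by
  have e1 : (x + (a : ZMod m) = x + (b : ZMod m)) ↔ a = b := by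
    rw [add_right_inj]; exact smallCastInj hm (by omega) (by omega) (by omega) (by omega)
  have e2 : (x + (b : ZMod m) = x + (a : ZMod m) + 1) ↔ b = a + 1 := by
    rw [add_assoc, add_right_inj,
      show ((a : ZMod m) + 1) = ((a + 1 : ℤ) : ZMod m) by push_cast; ring]
    exact smallCastInj hm (by omega) (by omega) (by omega) (by omega)
  have e3 : (x + (a : ZMod m) = x + (b : ZMod m) + 1) ↔ a = b + 1 := by
    rw [add_assoc, add_right_inj,
      show ((b : ZMod m) + 1) = ((b + 1 : ℤ) : ZMod m) by push_cast; ring]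
    exact smallCastInj hm (by omega) (by omega) (by omega) (by omega)
  show (x + (a : ZMod m) ≠ x + (b : ZMod m) ∧
      (x + (b : ZMod m) = x + (a : ZMod m) + 1 ∨ x + (a : ZMod m) = x + (b : ZMod m) + 1)) ↔ _
  simp only [ne_eq]
  rw [e1, e2, e3]

lemma spAdjIff {m n : ℕ} (hm : 11 ≤ m) (hn : 11 ≤ n) (x : ZMod m) (y : ZMod n)
    {a b c d : ℤ} (ha : -2 ≤ a) (ha' : a ≤ 2) (hb : -2 ≤ b) (hb' : b ≤ 2)
    (hc : -2 ≤ c) (hc' : c ≤ 2) (hd : -2 ≤ d) (hd' : d ≤ 2) :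
    (strongProd (cycleG m) (cycleG n)).Adj (x + (a : ZMod m), y + (b : ZMod n))
      (x + (c : ZMod m), y + (d : ZMod n)) ↔
    ((a = c ∧ (¬ (b = d) ∧ (d = b + 1 ∨ b = d + 1))) ∨
     (b = d ∧ (¬ (a = c) ∧ (c = a + 1 ∨ a = c + 1))) ∨
     ((¬ (a = c) ∧ (c = a + 1 ∨ a = c + 1)) ∧ (¬ (b = d) ∧ (d = b + 1 ∨ b = d + 1)))) := by
  have e1 : (x + (a : ZMod m) = x + (c : ZMod m)) ↔ a = c := by
    rw [add_right_inj]; exact smallCastInj hm (by omega) (by omega) (by omega) (by omega)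
  have e2 : (y + (b : ZMod n) = y + (d : ZMod n)) ↔ b = d := by
    rw [add_right_inj]; exact smallCastInj hn (by omega) (by omega) (by omega) (by omega)
  show ((x + (a : ZMod m) = x + (c : ZMod m) ∧
          (cycleG n).Adj (y + (b : ZMod n)) (y + (d : ZMod n))) ∨
        (y + (b : ZMod n) = y + (d : ZMod n) ∧
          (cycleG m).Adj (x + (a : ZMod m)) (x + (c : ZMod m))) ∨
        ((cycleG m).Adj (x + (a : ZMod m)) (x + (c : ZMod m)) ∧
          (cycleG n).Adj (y + (b : ZMod n)) (y + (d : ZMod n)))) ↔ _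
  rw [cycAdjIff hm x ha ha' hc hc', cycAdjIff hn y hb hb' hd hd', e1, e2]

lemma distTwo {V : Type*} {G : SimpleGraph V} {z a b : V} (h1 : G.Adj z a) (h2 : G.Adj z b)
    (hne : a ≠ b) (hna : ¬ G.Adj a b) : G.dist a b = 2 := by
  let hw : G.Walk a b :=
    SimpleGraph.Walk.cons h1.symm (SimpleGraph.Walk.cons h2 SimpleGraph.Walk.nil)
  have hle : G.dist a b ≤ 2 := by simpa [hw] using SimpleGraph.dist_le hw
  have hr : G.Reachable a b := ⟨hw⟩
  have h0 : G.dist a b ≠ 0 := by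
    rw [SimpleGraph.dist_ne_zero_iff_ne_and_reachable]; exact ⟨hne, hr⟩
  have h1' : G.dist a b ≠ 1 := fun h => hna (SimpleGraph.dist_eq_one_iff_adj.1 h)
  omega

lemma walk2 {V : Type*} {G : SimpleGraph V} {u v : V} (h : G.dist u v = 2) :
    ∃ w, G.Adj u w ∧ G.Adj w v := by
  obtain ⟨p, hp⟩ := G.exists_walk_of_dist_ne_zero (u := u) (v := v) (by omega)
  rw [h] at hp
  cases p with
  | nil => simp at hp
  | cons h1 q =>
    cases q with
    | nil => simp at hp
    | cons h2 r =>
      cases r with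
      | nil => exact ⟨_, h1, h2⟩
      | cons h3 r' => simp [SimpleGraph.Walk.length_cons] at hp

def lab {m n : ℕ} (hm : 11 ∣ m) (hn : 11 ∣ n) (p : ZMod m × ZMod n) : ZMod 11 :=
  2 * ZMod.castHom hm (ZMod 11) p.1 + 5 * ZMod.castHom hn (ZMod 11) p.2

lemma valDiff (x y : ZMod 11) :
    (11 : ℤ) ∣ ((x.val : ℤ) - (y.val : ℤ) - ((x - y).val : ℤ)) := by
  have h : (((x.val : ℤ) - (y.val : ℤ) - ((x - y).val : ℤ) : ℤ) : ZMod 11) = 0 := by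
    push_cast [ZMod.natCast_val, ZMod.cast_id]
    ring
  exact (ZMod.intCast_zmod_eq_zero_iff_dvd _ _).1 h

lemma adjShift {m n : ℕ} {u v : ZMod m × ZMod n}
    (h : (strongProd (cycleG m) (cycleG n)).Adj u v) :
    ∃ s t : ℤ, -1 ≤ s ∧ s ≤ 1 ∧ -1 ≤ t ∧ t ≤ 1 ∧ ¬(s = 0 ∧ t = 0) ∧
      v.1 = u.1 + (s : ZMod m) ∧ v.2 = u.2 + (t : ZMod n) := by
  rcases h with ⟨h1, h2⟩ | ⟨h1, h2⟩ | ⟨h1, h2⟩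
  · rcases h2.2 with h | h
    · exact ⟨0, 1, by norm_num, by norm_num, by norm_num, by norm_num, by norm_num,
        by rw [← h1]; norm_num, by rw [h]; norm_num⟩
    · exact ⟨0, -1, by norm_num, by norm_num, by norm_num, by norm_num, by norm_num,
        by rw [← h1]; norm_num, by rw [h]; push_cast; ring⟩
  · rcases h2.2 with h | h
    · exact ⟨1, 0, by norm_num, by norm_num, by norm_num, by norm_num, by norm_num,
        by rw [h]; norm_num, by rw [← h1]; norm_num⟩
    · exact ⟨-1, 0, by norm_num, by norm_num, by norm_num, by norm_num, by norm_num,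
        by rw [h]; push_cast; ring, by rw [← h1]; norm_num⟩
  · rcases h1.2 with ha | ha <;> rcases h2.2 with hb | hb
    · exact ⟨1, 1, by norm_num, by norm_num, by norm_num, by norm_num, by norm_num,
        by rw [ha]; norm_num, by rw [hb]; norm_num⟩
    · exact ⟨1, -1, by norm_num, by norm_num, by norm_num, by norm_num, by norm_num,
        by rw [ha]; norm_num, by rw [hb]; push_cast; ring⟩
    · exact ⟨-1, 1, by norm_num, by norm_num, by norm_num, by norm_num, by norm_num,
        by rw [ha]; push_cast; ring, by rw [hb]; norm_num⟩
    · exact ⟨-1, -1, by norm_num, by norm_num, by norm_num, by norm_num, by norm_num,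
        by rw [ha]; push_cast; ring, by rw [hb]; push_cast; ring⟩

lemma labShift {m n : ℕ} (hm : 11 ∣ m) (hn : 11 ∣ n) (u : ZMod m × ZMod n) (s t : ℤ) :
    lab hm hn (u.1 + (s : ZMod m), u.2 + (t : ZMod n)) - lab hm hn u
      = ((2 * s + 5 * t : ℤ) : ZMod 11) := by
  simp only [lab, map_add, map_intCast]
  push_cast
  ring

theorem pigeon (L c a1 a2 a3 a4 a5 a6 a7 a8 : ℕ)
    (h1 : L ≤ a1 ∧ a1 ≤ L+9) (h2 : L ≤ a2 ∧ a2 ≤ L+9) (h3 : L ≤ a3 ∧ a3 ≤ L+9)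
    (h4 : L ≤ a4 ∧ a4 ≤ L+9) (h5 : L ≤ a5 ∧ a5 ≤ L+9) (h6 : L ≤ a6 ∧ a6 ≤ L+9)
    (h7 : L ≤ a7 ∧ a7 ≤ L+9) (h8 : L ≤ a8 ∧ a8 ≤ L+9) (hc : L ≤ c ∧ c ≤ L+9)
    (g1 : a1+2 ≤ c ∨ c+2 ≤ a1) (g2 : a2+2 ≤ c ∨ c+2 ≤ a2) (g3 : a3+2 ≤ c ∨ c+2 ≤ a3)
    (g4 : a4+2 ≤ c ∨ c+2 ≤ a4) (g5 : a5+2 ≤ c ∨ c+2 ≤ a5) (g6 : a6+2 ≤ c ∨ c+2 ≤ a6)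
    (g7 : a7+2 ≤ c ∨ c+2 ≤ a7) (g8 : a8+2 ≤ c ∨ c+2 ≤ a8)
    (d12 : a1 ≠ a2) (d13 : a1 ≠ a3) (d14 : a1 ≠ a4) (d15 : a1 ≠ a5) (d16 : a1 ≠ a6)
    (d17 : a1 ≠ a7) (d18 : a1 ≠ a8)
    (d23 : a2 ≠ a3) (d24 : a2 ≠ a4) (d25 : a2 ≠ a5) (d26 : a2 ≠ a6) (d27 : a2 ≠ a7) (d28 : a2 ≠ a8)
    (d34 : a3 ≠ a4) (d35 : a3 ≠ a5) (d36 : a3 ≠ a6) (d37 : a3 ≠ a7) (d38 : a3 ≠ a8)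
    (d45 : a4 ≠ a5) (d46 : a4 ≠ a6) (d47 : a4 ≠ a7) (d48 : a4 ≠ a8)
    (d56 : a5 ≠ a6) (d57 : a5 ≠ a7) (d58 : a5 ≠ a8)
    (d67 : a6 ≠ a7) (d68 : a6 ≠ a8) (d78 : a7 ≠ a8) :
    c = L ∨ c = L + 9 := by
  by_contra hcon
  push_neg at hcon
  have hS : ({a1,a2,a3,a4,a5,a6,a7,a8} : Finset ℕ).card = 8 := by
    rw [Finset.card_insert_of_notMem (by simp [d12,d13,d14,d15,d16,d17,d18]),
        Finset.card_insert_of_notMem (by simp [d23,d24,d25,d26,d27,d28]),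
        Finset.card_insert_of_notMem (by simp [d34,d35,d36,d37,d38]),
        Finset.card_insert_of_notMem (by simp [d45,d46,d47,d48]),
        Finset.card_insert_of_notMem (by simp [d56,d57,d58]),
        Finset.card_insert_of_notMem (by simp [d67,d68]),
        Finset.card_insert_of_notMem (by simp [d78]),
        Finset.card_singleton]
  have hsub : ({a1,a2,a3,a4,a5,a6,a7,a8} : Finset ℕ) ⊆ (Finset.Icc L (L+9)) \ {c-1, c, c+1} := by
    intro x hx
    simp only [Finset.mem_insert, Finset.mem_singleton] at hx
    simp only [Finset.mem_sdiff, Finset.mem_Icc, Finset.mem_insert, Finset.mem_singleton]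
    rcases hx with rfl|rfl|rfl|rfl|rfl|rfl|rfl|rfl <;> omega
  have hT : ((Finset.Icc L (L+9)) \ {c-1, c, c+1}).card = 7 := by
    rw [Finset.card_sdiff_of_subset (by
      intro x hx
      simp only [Finset.mem_insert, Finset.mem_singleton] at hx
      simp only [Finset.mem_Icc]; omega)]
    have h3 : ({c-1,c,c+1} : Finset ℕ).card = 3 := by
      rw [Finset.card_insert_of_notMem (by simp; omega),
          Finset.card_insert_of_notMem (by simp), Finset.card_singleton]
    rw [h3, Nat.card_Icc]
    omega
  have := Finset.card_le_card hsub
  omega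

def vtx {m n : ℕ} (x : ZMod m) (y : ZMod n) (i j : ℤ) : ZMod m × ZMod n :=
  (x + (i : ZMod m), y + (j : ZMod n))

end Helpers

set_option maxHeartbeats 1000000 in
lemma lowerBound {m n : ℕ} (hm11 : 11 ≤ m) (hn11 : 11 ≤ n)
    (f : ZMod m × ZMod n → ℕ)
    (hf : IsL21Labeling (strongProd (cycleG m) (cycleG n)) f) :
    10 ≤ spanOf f := by
  haveI : NeZero m := ⟨by omega⟩
  haveI : NeZero n := ⟨by omega⟩
  have hbdd : BddAbove (Set.range f) := Set.Finite.bddAbove (Set.finite_range f)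
  set L := sInf (Set.range f) with hL
  set H := sSup (Set.range f) with hH
  have hfL : ∀ p, L ≤ f p := fun p => Nat.sInf_le ⟨p, rfl⟩
  have hfH : ∀ p, f p ≤ H := fun p => le_csSup hbdd ⟨p, rfl⟩
  by_contra hlt
  push_neg at hlt
  unfold spanOf at hlt
  rw [← hL, ← hH] at hlt
  have hLH : L ≤ H := le_trans (hfL (0, 0)) (hfH (0, 0))
  have hH9 : H ≤ L + 9 := by omega
  have key : ∀ (x : ZMod m) (y : ZMod n),
      f (vtx x y 0 0) = L ∨ f (vtx x y 0 0) = L + 9 := by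
    intro x y
    have hAdjIff : ∀ {a b c d : ℤ}, -2 ≤ a → a ≤ 2 → -2 ≤ b → b ≤ 2 → -2 ≤ c → c ≤ 2 →
        -2 ≤ d → d ≤ 2 →
        ((strongProd (cycleG m) (cycleG n)).Adj (vtx x y a b) (vtx x y c d) ↔ ((a = c ∧ (¬ (b = d) ∧ (d = b + 1 ∨ b = d + 1))) ∨ (b = d ∧ (¬ (a = c) ∧ (c = a + 1 ∨ a = c + 1))) ∨ ((¬ (a = c) ∧ (c = a + 1 ∨ a = c + 1)) ∧ (¬ (b = d) ∧ (d = b + 1 ∨ b = d + 1))))) :=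
      fun ha ha' hb hb' hc hc' hd hd' => spAdjIff hm11 hn11 x y ha ha' hb hb' hc hc' hd hd'
    have hge2 : ∀ {a b c d : ℤ},
        (-1 ≤ a ∧ a ≤ 1 ∧ -1 ≤ b ∧ b ≤ 1 ∧ -1 ≤ c ∧ c ≤ 1 ∧ -1 ≤ d ∧ d ≤ 1) →
        ((a = c ∧ (¬ (b = d) ∧ (d = b + 1 ∨ b = d + 1))) ∨ (b = d ∧ (¬ (a = c) ∧ (c = a + 1 ∨ a = c + 1))) ∨ ((¬ (a = c) ∧ (c = a + 1 ∨ a = c + 1)) ∧ (¬ (b = d) ∧ (d = b + 1 ∨ b = d + 1)))) →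
        (f (vtx x y a b) + 2 ≤ f (vtx x y c d) ∨ f (vtx x y c d) + 2 ≤ f (vtx x y a b)) := by
      intro a b c d hbnd hA
      have hadj : (strongProd (cycleG m) (cycleG n)).Adj (vtx x y a b) (vtx x y c d) :=
        (hAdjIff (a := a) (b := b) (c := c) (d := d) (by omega) (by omega) (by omega) (by omega)
          (by omega) (by omega) (by omega) (by omega)).2 hA
      have h2 := hf.1 _ _ hadj
      rcases abs_cases ((f (vtx x y a b) : ℤ) - (f (vtx x y c d) : ℤ)) with ⟨he, _⟩ | ⟨he, _⟩ <;>
        rw [he] at h2 <;> omega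
    have hNE : ∀ {a b c d : ℤ},
        (-1 ≤ a ∧ a ≤ 1 ∧ -1 ≤ b ∧ b ≤ 1 ∧ -1 ≤ c ∧ c ≤ 1 ∧ -1 ≤ d ∧ d ≤ 1) →
        ¬(a = c ∧ b = d) → f (vtx x y a b) ≠ f (vtx x y c d) := by
      intro a b c d hbnd hne
      by_cases hA : ((a = c ∧ (¬ (b = d) ∧ (d = b + 1 ∨ b = d + 1))) ∨ (b = d ∧ (¬ (a = c) ∧ (c = a + 1 ∨ a = c + 1))) ∨ ((¬ (a = c) ∧ (c = a + 1 ∨ a = c + 1)) ∧ (¬ (b = d) ∧ (d = b + 1 ∨ b = d + 1))))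
      · have := hge2 hbnd hA; omega
      · have hz1 : (strongProd (cycleG m) (cycleG n)).Adj (vtx x y 0 0) (vtx x y a b) := by
          refine (hAdjIff (a := 0) (b := 0) (c := a) (d := b) (by omega) (by omega) (by omega)
            (by omega) (by omega) (by omega) (by omega) (by omega)).2 ?_
          omega
        have hz2 : (strongProd (cycleG m) (cycleG n)).Adj (vtx x y 0 0) (vtx x y c d) := by
          refine (hAdjIff (a := 0) (b := 0) (c := c) (d := d) (by omega) (by omega) (by omega)
            (by omega) (by omega) (by omega) (by omega) (by omega)).2 ?_
          omega
        have hvne : vtx x y a b ≠ vtx x y c d := by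
          intro hEq
          have h1 : x + (a : ZMod m) = x + (c : ZMod m) := congrArg Prod.fst hEq
          have h2 : y + (b : ZMod n) = y + (d : ZMod n) := congrArg Prod.snd hEq
          rw [add_right_inj] at h1 h2
          rw [smallCastInj hm11 (by omega) (by omega) (by omega) (by omega)] at h1
          rw [smallCastInj hn11 (by omega) (by omega) (by omega) (by omega)] at h2
          exact hne ⟨h1, h2⟩
        have hnadj : ¬ (strongProd (cycleG m) (cycleG n)).Adj (vtx x y a b) (vtx x y c d) := by
          rw [hAdjIff (a := a) (b := b) (c := c) (d := d) (by omega) (by omega) (by omega)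
            (by omega) (by omega) (by omega) (by omega) (by omega)]
          exact hA
        have hdist := distTwo hz1 hz2 hvne hnadj
        have h1 := hf.2 _ _ hdist
        intro hEq
        rw [hEq, sub_self, abs_zero] at h1
        omega
    have hc9 : ∀ i j : ℤ, f (vtx x y i j) ≤ L + 9 := fun i j => le_trans (hfH _) hH9
    exact pigeon L (f (vtx x y 0 0))
      (f (vtx x y (-1) (-1))) (f (vtx x y (-1) 0)) (f (vtx x y (-1) 1)) (f (vtx x y 0 (-1))) (f (vtx x y 0 1)) (f (vtx x y 1 (-1))) (f (vtx x y 1 0)) (f (vtx x y 1 1))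
      ⟨hfL _, hc9 (-1) (-1)⟩
      ⟨hfL _, hc9 (-1) 0⟩
      ⟨hfL _, hc9 (-1) 1⟩
      ⟨hfL _, hc9 0 (-1)⟩
      ⟨hfL _, hc9 0 1⟩
      ⟨hfL _, hc9 1 (-1)⟩
      ⟨hfL _, hc9 1 0⟩
      ⟨hfL _, hc9 1 1⟩
      ⟨hfL _, hc9 0 0⟩
      (by have := hge2 (a:=0) (b:=0) (c:=(-1)) (d:=(-1)) (by omega) (by omega); omega)
      (by have := hge2 (a:=0) (b:=0) (c:=(-1)) (d:=0) (by omega) (by omega); omega)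
      (by have := hge2 (a:=0) (b:=0) (c:=(-1)) (d:=1) (by omega) (by omega); omega)
      (by have := hge2 (a:=0) (b:=0) (c:=0) (d:=(-1)) (by omega) (by omega); omega)
      (by have := hge2 (a:=0) (b:=0) (c:=0) (d:=1) (by omega) (by omega); omega)
      (by have := hge2 (a:=0) (b:=0) (c:=1) (d:=(-1)) (by omega) (by omega); omega)
      (by have := hge2 (a:=0) (b:=0) (c:=1) (d:=0) (by omega) (by omega); omega)
      (by have := hge2 (a:=0) (b:=0) (c:=1) (d:=1) (by omega) (by omega); omega)
      (hNE (a:=(-1)) (b:=(-1)) (c:=(-1)) (d:=0) (by omega) (by omega))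
      (hNE (a:=(-1)) (b:=(-1)) (c:=(-1)) (d:=1) (by omega) (by omega))
      (hNE (a:=(-1)) (b:=(-1)) (c:=0) (d:=(-1)) (by omega) (by omega))
      (hNE (a:=(-1)) (b:=(-1)) (c:=0) (d:=1) (by omega) (by omega))
      (hNE (a:=(-1)) (b:=(-1)) (c:=1) (d:=(-1)) (by omega) (by omega))
      (hNE (a:=(-1)) (b:=(-1)) (c:=1) (d:=0) (by omega) (by omega))
      (hNE (a:=(-1)) (b:=(-1)) (c:=1) (d:=1) (by omega) (by omega))
      (hNE (a:=(-1)) (b:=0) (c:=(-1)) (d:=1) (by omega) (by omega))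
      (hNE (a:=(-1)) (b:=0) (c:=0) (d:=(-1)) (by omega) (by omega))
      (hNE (a:=(-1)) (b:=0) (c:=0) (d:=1) (by omega) (by omega))
      (hNE (a:=(-1)) (b:=0) (c:=1) (d:=(-1)) (by omega) (by omega))
      (hNE (a:=(-1)) (b:=0) (c:=1) (d:=0) (by omega) (by omega))
      (hNE (a:=(-1)) (b:=0) (c:=1) (d:=1) (by omega) (by omega))
      (hNE (a:=(-1)) (b:=1) (c:=0) (d:=(-1)) (by omega) (by omega))
      (hNE (a:=(-1)) (b:=1) (c:=0) (d:=1) (by omega) (by omega))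
      (hNE (a:=(-1)) (b:=1) (c:=1) (d:=(-1)) (by omega) (by omega))
      (hNE (a:=(-1)) (b:=1) (c:=1) (d:=0) (by omega) (by omega))
      (hNE (a:=(-1)) (b:=1) (c:=1) (d:=1) (by omega) (by omega))
      (hNE (a:=0) (b:=(-1)) (c:=0) (d:=1) (by omega) (by omega))
      (hNE (a:=0) (b:=(-1)) (c:=1) (d:=(-1)) (by omega) (by omega))
      (hNE (a:=0) (b:=(-1)) (c:=1) (d:=0) (by omega) (by omega))
      (hNE (a:=0) (b:=(-1)) (c:=1) (d:=1) (by omega) (by omega))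
      (hNE (a:=0) (b:=1) (c:=1) (d:=(-1)) (by omega) (by omega))
      (hNE (a:=0) (b:=1) (c:=1) (d:=0) (by omega) (by omega))
      (hNE (a:=0) (b:=1) (c:=1) (d:=1) (by omega) (by omega))
      (hNE (a:=1) (b:=(-1)) (c:=1) (d:=0) (by omega) (by omega))
      (hNE (a:=1) (b:=(-1)) (c:=1) (d:=1) (by omega) (by omega))
      (hNE (a:=1) (b:=0) (c:=1) (d:=1) (by omega) (by omega))
  have key' : ∀ p : ZMod m × ZMod n, f p = L ∨ f p = L + 9 := by
    intro p
    have := key p.1 p.2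
    simpa [vtx] using this
  have adjNE : ∀ {p q : ZMod m × ZMod n},
      (strongProd (cycleG m) (cycleG n)).Adj p q → f p ≠ f q := by
    intro p q hpq hEq
    have h2 := hf.1 _ _ hpq
    rw [hEq, sub_self, abs_zero] at h2
    omega
  have t12 : (strongProd (cycleG m) (cycleG n)).Adj (vtx (0 : ZMod m) (0 : ZMod n) 0 0)
      (vtx (0 : ZMod m) (0 : ZMod n) 1 0) :=
    (spAdjIff hm11 hn11 0 0 (by omega) (by omega) (by omega) (by omega) (by omega) (by omega)
      (by omega) (by omega)).2 (by omega)
  have t13 : (strongProd (cycleG m) (cycleG n)).Adj (vtx (0 : ZMod m) (0 : ZMod n) 0 0)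
      (vtx (0 : ZMod m) (0 : ZMod n) 0 1) :=
    (spAdjIff hm11 hn11 0 0 (by omega) (by omega) (by omega) (by omega) (by omega) (by omega)
      (by omega) (by omega)).2 (by omega)
  have t23 : (strongProd (cycleG m) (cycleG n)).Adj (vtx (0 : ZMod m) (0 : ZMod n) 1 0)
      (vtx (0 : ZMod m) (0 : ZMod n) 0 1) :=
    (spAdjIff hm11 hn11 0 0 (by omega) (by omega) (by omega) (by omega) (by omega) (by omega)
      (by omega) (by omega)).2 (by omega)
  have ne12 := adjNE t12
  have ne13 := adjNE t13
  have ne23 := adjNE t23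
  have k1 := key' (vtx (0 : ZMod m) (0 : ZMod n) 0 0)
  have k2 := key' (vtx (0 : ZMod m) (0 : ZMod n) 1 0)
  have k3 := key' (vtx (0 : ZMod m) (0 : ZMod n) 0 1)
  omega

theorem lambda_strongProd_cycles_eq_ten (m n : ℕ) (hm : 11 ∣ m) (hm0 : 0 < m)
    (hn : 11 ∣ n) (hn0 : 0 < n) :
    lambdaNumber (strongProd (cycleG m) (cycleG n)) = 10 := by
  have hm11 : 11 ≤ m := Nat.le_of_dvd hm0 hm
  have hn11 : 11 ≤ n := Nat.le_of_dvd hn0 hn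
  haveI : NeZero m := ⟨by omega⟩
  haveI : NeZero n := ⟨by omega⟩
  set f₀ : ZMod m × ZMod n → ℕ := fun p => (lab hm hn p).val with hf₀
  have hL21 : IsL21Labeling (strongProd (cycleG m) (cycleG n)) f₀ := by
    constructor
    · intro u v huv
      obtain ⟨s, t, hs1, hs2, ht1, ht2, hst, hv1, hv2⟩ := adjShift huv
      have hveq : v = (u.1 + (s : ZMod m), u.2 + (t : ZMod n)) := Prod.ext hv1 hv2
      have hD : lab hm hn v - lab hm hn u = ((2 * s + 5 * t : ℤ) : ZMod 11) := by
        rw [hveq]; exact labShift hm hn u s t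
      have hval : 2 ≤ (((2 * s + 5 * t : ℤ)) : ZMod 11).val ∧
          (((2 * s + 5 * t : ℤ)) : ZMod 11).val ≤ 9 := by
        interval_cases s <;> interval_cases t
        all_goals try decide
        all_goals omega
      have hdvd := valDiff (lab hm hn v) (lab hm hn u)
      rw [hD] at hdvd
      have h1 := ZMod.val_lt (lab hm hn u)
      have h2 := ZMod.val_lt (lab hm hn v)
      show 2 ≤ |((lab hm hn u).val : ℤ) - ((lab hm hn v).val : ℤ)|
      rcases abs_cases (((lab hm hn u).val : ℤ) - ((lab hm hn v).val : ℤ)) with ⟨he, _⟩ | ⟨he, _⟩ <;>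
        rw [he] <;> omega
    · intro u v hdist
      obtain ⟨w, hw1, hw2⟩ := walk2 hdist
      obtain ⟨s1, t1, hs11, hs12, ht11, ht12, -, hw11, hw12⟩ := adjShift hw1
      obtain ⟨s2, t2, hs21, hs22, ht21, ht22, -, hv1, hv2⟩ := adjShift hw2
      have hveq : v = (u.1 + ((s1 + s2 : ℤ) : ZMod m), u.2 + ((t1 + t2 : ℤ) : ZMod n)) := by
        refine Prod.ext ?_ ?_
        · rw [hv1, hw11]; push_cast; ring
        · rw [hv2, hw12]; push_cast; ring
      by_cases hST : s1 + s2 = 0 ∧ t1 + t2 = 0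
      · exfalso
        have hvu : v = u := by rw [hveq, hST.1, hST.2]; simp
        rw [hvu, SimpleGraph.dist_self] at hdist
        omega
      · have hD : lab hm hn v - lab hm hn u
            = ((2 * (s1 + s2) + 5 * (t1 + t2) : ℤ) : ZMod 11) := by
          rw [hveq]; exact labShift hm hn u _ _
        have hC0 : ((2 * (s1 + s2) + 5 * (t1 + t2) : ℤ) : ZMod 11) ≠ 0 := by
          intro h0
          rw [ZMod.intCast_zmod_eq_zero_iff_dvd] at h0
          clear hveq hdist
          interval_cases s1 <;> interval_cases s2 <;> interval_cases t1 <;>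
            interval_cases t2 <;> omega
        have hCne : (lab hm hn v - lab hm hn u).val ≠ 0 := by
          rw [hD]
          intro h0
          exact hC0 ((ZMod.val_eq_zero _).1 h0)
        have hdvd := valDiff (lab hm hn v) (lab hm hn u)
        have hCl := ZMod.val_lt (lab hm hn v - lab hm hn u)
        have h1 := ZMod.val_lt (lab hm hn u)
        have h2 := ZMod.val_lt (lab hm hn v)
        show 1 ≤ |((lab hm hn u).val : ℤ) - ((lab hm hn v).val : ℤ)|
        rcases abs_cases (((lab hm hn u).val : ℤ) - ((lab hm hn v).val : ℤ)) with ⟨he, _⟩ | ⟨he, _⟩ <;>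
          rw [he] <;> omega
  have hspan10 : spanOf f₀ ≤ 10 := by
    have hsup : sSup (Set.range f₀) ≤ 10 := by
      apply csSup_le (Set.range_nonempty f₀)
      rintro x ⟨p, rfl⟩
      have := ZMod.val_lt (lab hm hn p)
      simp only [hf₀]
      omega
    unfold spanOf
    omega
  have hmem : spanOf f₀ ∈
      {s : ℕ | ∃ g : ZMod m × ZMod n → ℕ,
        IsL21Labeling (strongProd (cycleG m) (cycleG n)) g ∧ spanOf g = s} :=
    ⟨f₀, hL21, rfl⟩
  have hlow : ∀ s ∈ {s : ℕ | ∃ g : ZMod m × ZMod n → ℕ,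
      IsL21Labeling (strongProd (cycleG m) (cycleG n)) g ∧ spanOf g = s}, 10 ≤ s := by
    rintro s ⟨g, hg, rfl⟩
    exact lowerBound hm11 hn11 g hg
  have hub : lambdaNumber (strongProd (cycleG m) (cycleG n)) ≤ spanOf f₀ := Nat.sInf_le hmem
  have hlb : 10 ≤ lambdaNumber (strongProd (cycleG m) (cycleG n)) := le_csInf ⟨_, hmem⟩ hlow
  omega
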